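/- arXiv:1905.02037 — 4 statements merged into one kernel-verified Lean document; each statement's English description precedes it below -/
import Mathlib

section
/- Let n ≥ 2, 0 < λ ≤ Λ < ∞, and α ∈ (0,1). Then for every A₁, A₂ ∈ 𝒜(λ,Λ): min_{Q ∈ O(n)} trace{ J_α (A₁ + A₂ − 2A₂^{1/2} Q A₁^{1/2}) } ≤ 4[ √(nΛ)·‖A₁^{1/2} − A₂^{1/2}‖ − (1−α)λ ], where ‖·‖ is the Frobenius norm. In particular, if ‖A₁^{1/2} − A₂^{1/2}‖ ≤ (1−α)λ / (2√(nΛ)), then min_{Q ∈ O(n)} trace{ J_α (A₁ + A₂ − 2A₂^{1/2} Q A₁^{1/2}) } ≤ −2(1−α)λ. -/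
open MeasureTheory Matrix

noncomputable section

abbrev EucSp (n : ℕ) := EuclideanSpace ℝ (Fin n)

/-- Principal square root of a positive semidefinite matrix (zero otherwise). -/
noncomputable def msqrt {n : ℕ} (A : Matrix (Fin n) (Fin n) ℝ) : Matrix (Fin n) (Fin n) ℝ :=
  open scoped Classical in
  if h : A.PosSemidef then
    h.1.eigenvectorUnitary.1 * diagonal ((↑) ∘ (√·) ∘ h.1.eigenvalues) *
      (star h.1.eigenvectorUnitary : Matrix (Fin n) (Fin n) ℝ) else 0

/-- `A ∈ 𝒜(λ,Λ)`: symmetric and uniformly elliptic. -/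
def UnifElliptic {n : ℕ} (lam Lam : ℝ) (A : Matrix (Fin n) (Fin n) ℝ) : Prop :=
  A.IsSymm ∧ ∀ ξ : Fin n → ℝ,
    lam * (ξ ⬝ᵥ ξ) ≤ ξ ⬝ᵥ A.mulVec ξ ∧ ξ ⬝ᵥ A.mulVec ξ ≤ Lam * (ξ ⬝ᵥ ξ)

/-- Membership in the orthogonal group `O(n)`. -/
def IsOrthMat {n : ℕ} (Q : Matrix (Fin n) (Fin n) ℝ) : Prop :=
  Q * Qᵀ = 1 ∧ Qᵀ * Q = 1

/-- Matrix acting on Euclidean space. -/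
noncomputable def mvE {n : ℕ} (M : Matrix (Fin n) (Fin n) ℝ) (y : EucSp n) : EucSp n :=
  (EuclideanSpace.equiv (Fin n) ℝ).symm (M.mulVec ((EuclideanSpace.equiv (Fin n) ℝ) y))

/-- The ellipsoid `x + ε A^{1/2} 𝔹`. -/
noncomputable def ellipsoid {n : ℕ} (ε : ℝ) (M : Matrix (Fin n) (Fin n) ℝ) (x : EucSp n) :
    Set (EucSp n) :=
  (fun y => x + ε • mvE (msqrt M) y) '' Metric.ball (0 : EucSp n) 1

/-- The matrix `J_α = diag(α-1, 1, …, 1)`. -/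
noncomputable def Jmat (n : ℕ) (α : ℝ) : Matrix (Fin n) (Fin n) ℝ :=
  Matrix.diagonal (fun i => if (i : ℕ) = 0 then α - 1 else 1)

/-- Reflection in the first coordinate axis. -/
noncomputable def J0 (n : ℕ) : Matrix (Fin n) (Fin n) ℝ :=
  Matrix.diagonal (fun i => if (i : ℕ) = 0 then -1 else 1)

/-- The first standard basis vector `e₁`. -/
noncomputable def e1 (n : ℕ) : EucSp n :=
  (EuclideanSpace.equiv (Fin n) ℝ).symm (fun i => if (i : ℕ) = 0 then 1 else 0)

/-- `f₁(x,z) = C|x-z|^α + C̃|x+z|²`. -/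
noncomputable def f1 {n : ℕ} (α C Ct : ℝ) (x z : EucSp n) : ℝ :=
  C * ‖x - z‖ ^ α + Ct * ‖x + z‖ ^ 2

/-- The annular step function `f₂`. -/
noncomputable def f2 {n : ℕ} (α C lam ε : ℝ) (N : ℕ) (x z : EucSp n) : ℝ :=
  if ‖x - z‖ / (Real.sqrt lam * ε) > (N : ℝ) then 0
  else C ^ (2 * (2 * N - ⌈2 * ‖x - z‖ / (Real.sqrt lam * ε)⌉₊)) * ε ^ α

/-! ### Auxiliary lemmas for Statement 9 -/

/-- The trace of `Mᵀ * M` is nonnegative. -/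
lemma traceTN {k : ℕ} (M : Matrix (Fin k) (Fin k) ℝ) : 0 ≤ Matrix.trace (Mᵀ * M) := by
  rw [Matrix.trace]
  refine Finset.sum_nonneg fun i _ => ?_
  simp only [Matrix.diag_apply, Matrix.mul_apply, Matrix.transpose_apply]
  exact Finset.sum_nonneg fun j _ => mul_self_nonneg _

/-- Quadratic form upper bound implies a trace bound. -/
lemma trace_quad_le {k : ℕ} {Lam : ℝ} {A : Matrix (Fin k) (Fin k) ℝ}
    (hA : ∀ ξ : Fin k → ℝ, ξ ⬝ᵥ A.mulVec ξ ≤ Lam * (ξ ⬝ᵥ ξ))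
    (X : Matrix (Fin k) (Fin k) ℝ) :
    Matrix.trace (X * A * Xᵀ) ≤ Lam * Matrix.trace (X * Xᵀ) := by
  have key : ∀ i, (X * A * Xᵀ) i i ≤ Lam * ((X * Xᵀ) i i) := by
    intro i
    have h1 : (X * A * Xᵀ) i i = (fun j => X i j) ⬝ᵥ A.mulVec (fun j => X i j) := by
      simp only [Matrix.mul_apply, Matrix.transpose_apply, Matrix.mulVec, dotProduct]
      simp_rw [Finset.sum_mul, Finset.mul_sum]
      rw [Finset.sum_comm]
      exact Finset.sum_congr rfl fun j _ => Finset.sum_congr rfl fun x _ => by ring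
    have h2 : (X * Xᵀ) i i = (fun j => X i j) ⬝ᵥ (fun j => X i j) := by
      simp [Matrix.mul_apply, Matrix.transpose_apply, dotProduct]
    rw [h1, h2]
    exact hA _
  rw [Matrix.trace, Matrix.trace, Finset.mul_sum]
  exact Finset.sum_le_sum fun i _ => key i

/-- Bounding the trace against the `J` matrix by the Frobenius norm. -/
lemma trace_J_mul_le {k : ℕ} {α : ℝ} (hα : α ∈ Set.Ioo (0:ℝ) 1)
    (M : Matrix (Fin k) (Fin k) ℝ) :
    Matrix.trace (Jmat k α * M) ≤
      Real.sqrt k * Real.sqrt (Matrix.trace (Mᵀ * M)) := by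
  obtain ⟨h0, h1⟩ := hα
  have habs : ∀ i : Fin k, |(if (i : ℕ) = 0 then α - 1 else 1 : ℝ)| ≤ 1 := by
    intro i
    by_cases h : (i : ℕ) = 0 <;> simp [h]
    rw [abs_le]; constructor <;> linarith
  have step1 : Matrix.trace (Jmat k α * M) ≤ ∑ i, |M i i| := by
    rw [Matrix.trace]
    refine Finset.sum_le_sum fun i _ => ?_
    have hd : (Jmat k α * M).diag i = (if (i : ℕ) = 0 then α - 1 else 1 : ℝ) * M i i := by
      simp [Matrix.diag_apply, Jmat, Matrix.diagonal_mul]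
    rw [hd]
    calc (if (i : ℕ) = 0 then α - 1 else 1 : ℝ) * M i i
        ≤ |(if (i : ℕ) = 0 then α - 1 else 1 : ℝ) * M i i| := le_abs_self _
      _ = |(if (i : ℕ) = 0 then α - 1 else 1 : ℝ)| * |M i i| := abs_mul _ _
      _ ≤ 1 * |M i i| := mul_le_mul_of_nonneg_right (habs i) (abs_nonneg _)
      _ = |M i i| := one_mul _
  have step2 : (∑ i, |M i i|) ≤ Real.sqrt ((k : ℝ) * Matrix.trace (Mᵀ * M)) := by
    have htr : ∑ i, (M i i) ^ 2 ≤ Matrix.trace (Mᵀ * M) := by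
      rw [Matrix.trace]
      refine Finset.sum_le_sum fun i _ => ?_
      simp only [Matrix.diag_apply, Matrix.mul_apply, Matrix.transpose_apply]
      have hs := Finset.single_le_sum (f := fun j => M j i * M j i)
        (fun j _ => mul_self_nonneg _) (Finset.mem_univ i)
      calc (M i i) ^ 2 = M i i * M i i := by ring
        _ ≤ ∑ j, M j i * M j i := hs
    have hcs : (∑ i, |M i i|) ^ 2 ≤ (k : ℝ) * ∑ i, (M i i) ^ 2 := by
      have h := Finset.sum_mul_sq_le_sq_mul_sq Finset.univ (fun _ : Fin k => (1:ℝ))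
        (fun i => |M i i|)
      simp only [one_mul, one_pow, Finset.sum_const, Finset.card_univ, Fintype.card_fin,
        nsmul_eq_mul, mul_one, sq_abs] at h
      exact h
    rw [Real.le_sqrt (Finset.sum_nonneg fun i _ => abs_nonneg _)
      (mul_nonneg (Nat.cast_nonneg k) (traceTN M))]
    calc (∑ i, |M i i|) ^ 2 ≤ (k:ℝ) * ∑ i, (M i i)^2 := hcs
      _ ≤ (k:ℝ) * Matrix.trace (Mᵀ * M) :=
          mul_le_mul_of_nonneg_left htr (Nat.cast_nonneg k)
  calc Matrix.trace (Jmat k α * M) ≤ ∑ i, |M i i| := step1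
    _ ≤ Real.sqrt ((k : ℝ) * Matrix.trace (Mᵀ * M)) := step2
    _ = Real.sqrt k * Real.sqrt (Matrix.trace (Mᵀ * M)) :=
        Real.sqrt_mul (Nat.cast_nonneg k) _

lemma vecMulVec_mul_self {k : ℕ} (u : Fin k → ℝ) :
    Matrix.vecMulVec u u * Matrix.vecMulVec u u = (u ⬝ᵥ u) • Matrix.vecMulVec u u := by
  ext i j
  simp only [Matrix.mul_apply, Matrix.vecMulVec_apply, Matrix.smul_apply, smul_eq_mul,
    dotProduct]
  calc ∑ l, u i * u l * (u l * u j) = ∑ l, (u l * u l) * (u i * u j) :=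
        Finset.sum_congr rfl fun l _ => by ring
    _ = (∑ l, u l * u l) * (u i * u j) := by rw [Finset.sum_mul]

lemma mul_vecMulVec_mul {k : ℕ} (B : Matrix (Fin k) (Fin k) ℝ) (hB : Bᵀ = B)
    (u : Fin k → ℝ) :
    B * Matrix.vecMulVec u u * B = Matrix.vecMulVec (B *ᵥ u) (B *ᵥ u) := by
  ext i j
  simp only [Matrix.mul_apply, Matrix.vecMulVec_apply, Matrix.mulVec, dotProduct]
  have hsymm : ∀ l, B l j = B j l := fun l => by
    rw [← Matrix.transpose_apply B l j, hB]
  calc ∑ l, (∑ m, B i m * (u m * u l)) * B l j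
      = ∑ l, ((∑ m, B i m * u m) * (u l * B j l)) := by
        refine Finset.sum_congr rfl fun l _ => ?_
        rw [hsymm l, Finset.sum_mul, Finset.sum_mul]
        exact Finset.sum_congr rfl fun m _ => by ring
    _ = (∑ m, B i m * u m) * ∑ l, u l * B j l := by rw [Finset.mul_sum]
    _ = (∑ m, B i m * u m) * ∑ l, B j l * u l := by
        congr 1; exact Finset.sum_congr rfl fun l _ => mul_comm _ _

lemma frob_mul_right {k : ℕ} {Lam : ℝ} {A B : Matrix (Fin k) (Fin k) ℝ}
    (X : Matrix (Fin k) (Fin k) ℝ) (hB : Bᵀ = B) (hBB : B * B = A)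
    (hA : ∀ ξ : Fin k → ℝ, ξ ⬝ᵥ A.mulVec ξ ≤ Lam * (ξ ⬝ᵥ ξ)) :
    Matrix.trace ((X * B)ᵀ * (X * B)) ≤ Lam * Matrix.trace (Xᵀ * X) := by
  calc Matrix.trace ((X * B)ᵀ * (X * B)) = Matrix.trace ((X * B) * (X * B)ᵀ) :=
        Matrix.trace_mul_comm _ _
    _ = Matrix.trace (X * A * Xᵀ) := by
        rw [Matrix.transpose_mul, hB, Matrix.mul_assoc X B (B * Xᵀ),
          ← Matrix.mul_assoc B B Xᵀ, hBB, ← Matrix.mul_assoc]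
    _ ≤ Lam * Matrix.trace (X * Xᵀ) := trace_quad_le hA X
    _ = Lam * Matrix.trace (Xᵀ * X) := by rw [Matrix.trace_mul_comm]

lemma frob_mul_left {k : ℕ} {Lam : ℝ} {A B : Matrix (Fin k) (Fin k) ℝ}
    (X : Matrix (Fin k) (Fin k) ℝ) (hB : Bᵀ = B) (hBB : B * B = A)
    (hA : ∀ ξ : Fin k → ℝ, ξ ⬝ᵥ A.mulVec ξ ≤ Lam * (ξ ⬝ᵥ ξ)) :
    Matrix.trace ((B * X)ᵀ * (B * X)) ≤ Lam * Matrix.trace (Xᵀ * X) := by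
  have h : (B * X)ᵀ * (B * X) = Xᵀ * A * (Xᵀ)ᵀ := by
    rw [Matrix.transpose_mul, hB, Matrix.mul_assoc Xᵀ B (B * X),
      ← Matrix.mul_assoc B B X, hBB, ← Matrix.mul_assoc, Matrix.transpose_transpose]
  rw [h]
  calc Matrix.trace (Xᵀ * A * (Xᵀ)ᵀ) ≤ Lam * Matrix.trace (Xᵀ * (Xᵀ)ᵀ) :=
        trace_quad_le hA Xᵀ
    _ = Lam * Matrix.trace (Xᵀ * X) := by rw [Matrix.transpose_transpose]

lemma sum_ite_val {k : ℕ} (hk : 0 < k) (r : ℝ) :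
    (∑ i : Fin k, if (i : ℕ) = 0 then r else 0) = r := by
  rw [Finset.sum_eq_single (⟨0, hk⟩ : Fin k)]
  · simp
  · intro b _ hb
    have hb' : (b : ℕ) ≠ 0 := fun h => hb (Fin.ext h)
    simp [hb']
  · intro h; exact absurd (Finset.mem_univ _) h

lemma msqrt_mul_self' {k : ℕ} {A : Matrix (Fin k) (Fin k) ℝ} (h : A.PosSemidef) :
    msqrt A * msqrt A = A := by
  unfold msqrt
  rw [dif_pos h]
  have hU : (star h.1.eigenvectorUnitary : Matrix (Fin k) (Fin k) ℝ) *
      h.1.eigenvectorUnitary.1 = 1 := Unitary.coe_star_mul_self _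
  have hD : diagonal (((↑) ∘ (√·) ∘ h.1.eigenvalues : Fin k → ℝ)) *
      diagonal ((↑) ∘ (√·) ∘ h.1.eigenvalues) = diagonal (RCLike.ofReal ∘ h.1.eigenvalues) := by
    rw [diagonal_mul_diagonal]
    congr 1; funext i
    simp [Real.mul_self_sqrt (h.eigenvalues_nonneg i)]
  conv_rhs => rw [h.1.spectral_theorem, Unitary.conjStarAlgAut_apply]
  calc _ = h.1.eigenvectorUnitary.1 * diagonal ((↑) ∘ (√·) ∘ h.1.eigenvalues) *
        ((star h.1.eigenvectorUnitary : Matrix (Fin k) (Fin k) ℝ) *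
      h.1.eigenvectorUnitary.1) * diagonal ((↑) ∘ (√·) ∘ h.1.eigenvalues) *
        (star h.1.eigenvectorUnitary : Matrix (Fin k) (Fin k) ℝ) := by
        simp only [Matrix.mul_assoc]
    _ = _ := by rw [hU, Matrix.mul_one, Matrix.mul_assoc _ (diagonal _) (diagonal _), hD]

lemma msqrt_transpose' {k : ℕ} {A : Matrix (Fin k) (Fin k) ℝ} (h : A.PosSemidef) :
    (msqrt A)ᵀ = msqrt A := by
  unfold msqrt
  rw [dif_pos h, ← Matrix.conjTranspose_eq_transpose_of_trivial]
  rw [← Matrix.star_eq_conjTranspose, star_mul, star_mul, star_star, Matrix.mul_assoc,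
    Matrix.star_eq_conjTranspose (diagonal _), Matrix.diagonal_conjTranspose, star_trivial]

/-- the coupling trace estimate in terms of the Frobenius distance
of the square roots (continuous coefficients remark). -/
theorem stmt9 {n : ℕ} (hn : 2 ≤ n)
    (lam Lam : ℝ) (hlam : 0 < lam) (hlL : lam ≤ Lam)
    (α : ℝ) (hα : α ∈ Set.Ioo (0 : ℝ) 1) :
    ∀ A1 A2 : Matrix (Fin n) (Fin n) ℝ,
      UnifElliptic lam Lam A1 → UnifElliptic lam Lam A2 →
      (∃ Q, IsOrthMat Q ∧
        Matrix.trace (Jmat n α * (A1 + A2 - (2 : ℝ) • (msqrt A2 * Q * msqrt A1))) ≤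
          4 * (Real.sqrt ((n : ℝ) * Lam) *
              Real.sqrt (Matrix.trace ((msqrt A1 - msqrt A2)ᵀ * (msqrt A1 - msqrt A2)))
            - (1 - α) * lam)) ∧
      (Real.sqrt (Matrix.trace ((msqrt A1 - msqrt A2)ᵀ * (msqrt A1 - msqrt A2))) ≤
          (1 - α) * lam / (2 * Real.sqrt ((n : ℝ) * Lam)) →
        ∃ Q, IsOrthMat Q ∧
          Matrix.trace (Jmat n α * (A1 + A2 - (2 : ℝ) • (msqrt A2 * Q * msqrt A1))) ≤
            -(2 * (1 - α) * lam)) := by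
  obtain ⟨hα0, hα1⟩ := hα
  intro A1 A2 hA1 hA2
  have hn0 : 0 < n := by omega
  have hLam0 : (0:ℝ) < Lam := lt_of_lt_of_le hlam hlL
  -- positive definiteness
  have posdef : ∀ A : Matrix (Fin n) (Fin n) ℝ, UnifElliptic lam Lam A → A.PosDef := by
    intro A hA
    refine Matrix.PosDef.of_dotProduct_mulVec_pos ?_ ?_
    · rw [Matrix.IsHermitian, Matrix.conjTranspose_eq_transpose_of_trivial]
      exact hA.1
    · intro x hx
      have hq := (hA.2 x).1
      have hxx : 0 < x ⬝ᵥ x := by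
        have h0 : (0:ℝ) ≤ x ⬝ᵥ x := Finset.sum_nonneg fun i _ => mul_self_nonneg _
        rcases h0.lt_or_eq with h | h
        · exact h
        · exact absurd (dotProduct_self_eq_zero.1 h.symm) hx
      have hstar : star x = x := funext fun i => star_trivial _
      rw [hstar]
      calc (0:ℝ) < lam * (x ⬝ᵥ x) := mul_pos hlam hxx
        _ ≤ x ⬝ᵥ A *ᵥ x := hq
  have hA1pd := posdef A1 hA1
  have hA2pd := posdef A2 hA2
  have hpsd1 : A1.PosSemidef := hA1pd.posSemidef
  have hpsd2 : A2.PosSemidef := hA2pd.posSemidef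
  set B1 := msqrt A1 with hB1def
  set B2 := msqrt A2 with hB2def
  have hB1sq : B1 * B1 = A1 := by rw [hB1def]; exact msqrt_mul_self' hpsd1
  have hB2sq : B2 * B2 = A2 := by rw [hB2def]; exact msqrt_mul_self' hpsd2
  have hB1t : B1ᵀ = B1 := by
    rw [hB1def]; exact msqrt_transpose' hpsd1
  have hB2t : B2ᵀ = B2 := by
    rw [hB2def]; exact msqrt_transpose' hpsd2
  -- construction of the reflection Q
  have hdetB1 : IsUnit B1.det := by
    have hdd : B1.det * B1.det = A1.det := by rw [← Matrix.det_mul, hB1sq]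
    have hApos := hA1pd.det_pos
    refine isUnit_iff_ne_zero.2 fun h0 => ?_
    rw [h0, mul_zero] at hdd
    rw [← hdd] at hApos
    exact lt_irrefl _ hApos
  set e : Fin n → ℝ := fun i => if (i:ℕ) = 0 then 1 else 0 with he
  set u : Fin n → ℝ := B1⁻¹ *ᵥ e with hu
  have hBu : B1 *ᵥ u = e := by
    rw [hu, Matrix.mulVec_mulVec, Matrix.mul_nonsing_inv _ hdetB1, Matrix.one_mulVec]
  have hee : e ⬝ᵥ e = 1 := by
    have h : ∀ i : Fin n, e i * e i = if (i:ℕ) = 0 then (1:ℝ) else 0 := fun i => by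
      by_cases h : (i:ℕ) = 0 <;> simp [he, h]
    calc e ⬝ᵥ e = ∑ i, e i * e i := rfl
      _ = ∑ i : Fin n, (if (i:ℕ) = 0 then (1:ℝ) else 0) := Finset.sum_congr rfl fun i _ => h i
      _ = 1 := sum_ite_val hn0 1
  have hu0 : u ≠ 0 := by
    intro h
    have h1 : B1 *ᵥ u = 0 := by rw [h, Matrix.mulVec_zero]
    rw [hBu] at h1
    have h2 := congrFun h1 ⟨0, hn0⟩
    simp [he] at h2
  set t : ℝ := u ⬝ᵥ u with ht
  have ht0 : 0 < t := by
    obtain ⟨i0, hi0⟩ := Function.ne_iff.1 hu0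
    rw [ht, dotProduct]
    refine Finset.sum_pos' (fun i _ => mul_self_nonneg _) ⟨i0, Finset.mem_univ _, ?_⟩
    exact mul_self_pos.2 (by simpa using hi0)
  have hlt : lam * t ≤ 1 := by
    have h1 := (hA1.2 u).1
    have h2 : u ⬝ᵥ A1 *ᵥ u = 1 := by
      rw [← hB1sq, ← Matrix.mulVec_mulVec, hBu, Matrix.dotProduct_mulVec,
        ← hB1t, Matrix.vecMul_transpose, hBu, hee]
    rw [← ht, h2] at h1
    exact h1
  have htne : t ≠ 0 := ne_of_gt ht0
  set c : ℝ := 2 / t with hc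
  set N := Matrix.vecMulVec u u with hN
  set Q := (1 : Matrix (Fin n) (Fin n) ℝ) - c • N with hQdef
  have hNt : Nᵀ = N := by
    rw [hN]; ext i j
    simp only [Matrix.transpose_apply, Matrix.vecMulVec_apply]
    ring
  have hNN : N * N = t • N := by rw [hN, ht]; exact vecMulVec_mul_self u
  have hQt : Qᵀ = Q := by
    rw [hQdef, Matrix.transpose_sub, Matrix.transpose_one, Matrix.transpose_smul, hNt]
  have hQQ : Q * Q = 1 := by
    have hct : c * c * t = c + c := by
      rw [hc]; field_simp; ring
    rw [hQdef]
    simp only [sub_mul, mul_sub, one_mul, mul_one, Matrix.smul_mul, Matrix.mul_smul, smul_smul]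
    rw [hNN, smul_smul, hct, add_smul]
    abel
  have hQorth : IsOrthMat Q := ⟨by rw [hQt]; exact hQQ, by rw [hQt]; exact hQQ⟩
  have hQQt : Q * Qᵀ = 1 := hQorth.1
  -- key matrix identities
  have hBNB : B1 * N * B1 = Matrix.vecMulVec e e := by
    rw [hN, mul_vecMulVec_mul B1 hB1t u, hBu]
  have hBQB : B1 * Q * B1 = A1 - c • Matrix.vecMulVec e e := by
    rw [hQdef, mul_sub, mul_one, Matrix.mul_smul, sub_mul, Matrix.smul_mul, hB1sq,
      Matrix.mul_assoc]
    rw [← Matrix.mul_assoc, hBNB]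
  set D := B1 - B2 with hD
  set s := Matrix.trace (Dᵀ * D) with hs
  have hsnn : 0 ≤ s := by rw [hs]; exact traceTN D
  set S := Real.sqrt ((n:ℝ) * Lam) with hS
  set d := Real.sqrt s with hd
  have hd0 : 0 ≤ d := Real.sqrt_nonneg _
  -- decomposition identity
  have hid : A1 + A2 - (2:ℝ) • (B2 * Q * B1)
      = (2*c) • Matrix.vecMulVec e e + (-(B2 * D)) + (-(D * B1)) + (2:ℝ) • (D * Q * B1) := by
    have h2 : D * Q * B1 = B1 * Q * B1 - B2 * Q * B1 := by rw [hD, sub_mul, sub_mul]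
    rw [h2, hBQB, hD]
    simp only [mul_sub, sub_mul, hB1sq, hB2sq]
    module
  -- trace decomposition
  have htr : Matrix.trace (Jmat n α * (A1 + A2 - (2:ℝ) • (B2 * Q * B1)))
      = (2*c) * Matrix.trace (Jmat n α * Matrix.vecMulVec e e)
        + Matrix.trace (Jmat n α * (-(B2 * D)))
        + Matrix.trace (Jmat n α * (-(D * B1)))
        + 2 * Matrix.trace (Jmat n α * (D * Q * B1)) := by
    rw [hid]
    simp only [mul_add, Matrix.mul_smul, Matrix.trace_add, Matrix.trace_smul, smul_eq_mul]
  have hJE : Matrix.trace (Jmat n α * Matrix.vecMulVec e e) = α - 1 := by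
    have h : ∀ i : Fin n, (Jmat n α * Matrix.vecMulVec e e).diag i
        = if (i:ℕ) = 0 then α - 1 else 0 := by
      intro i
      simp only [Matrix.diag_apply, Jmat, Matrix.diagonal_mul, Matrix.vecMulVec_apply, he]
      by_cases hi : (i:ℕ) = 0 <;> simp [hi]
    calc Matrix.trace (Jmat n α * Matrix.vecMulVec e e)
        = ∑ i, (Jmat n α * Matrix.vecMulVec e e).diag i := rfl
      _ = ∑ i : Fin n, (if (i:ℕ) = 0 then α - 1 else 0) := Finset.sum_congr rfl fun i _ => h i
      _ = α - 1 := sum_ite_val hn0 _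
  -- the three error bounds
  have hSd : ∀ M : Matrix (Fin n) (Fin n) ℝ, Matrix.trace (Mᵀ * M) ≤ Lam * s →
      Matrix.trace (Jmat n α * M) ≤ S * d := by
    intro M hM
    have h1 := trace_J_mul_le ⟨hα0, hα1⟩ M
    have h2 : Real.sqrt (Matrix.trace (Mᵀ * M)) ≤ Real.sqrt (Lam * s) := Real.sqrt_le_sqrt hM
    have h3 : Real.sqrt (Lam * s) = Real.sqrt Lam * d := by rw [hd, Real.sqrt_mul hLam0.le]
    have h4 : S = Real.sqrt n * Real.sqrt Lam := by rw [hS, Real.sqrt_mul (Nat.cast_nonneg n)]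
    calc Matrix.trace (Jmat n α * M)
        ≤ Real.sqrt n * Real.sqrt (Matrix.trace (Mᵀ * M)) := h1
      _ ≤ Real.sqrt n * (Real.sqrt Lam * d) := by
          rw [← h3]; exact mul_le_mul_of_nonneg_left h2 (Real.sqrt_nonneg _)
      _ = S * d := by rw [h4]; ring
  have hM1 : Matrix.trace ((-(B2 * D))ᵀ * (-(B2 * D))) ≤ Lam * s := by
    rw [Matrix.transpose_neg, Matrix.neg_mul, Matrix.mul_neg, neg_neg, hs]
    exact frob_mul_left D hB2t hB2sq (fun ξ => (hA2.2 ξ).2)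
  have hM2 : Matrix.trace ((-(D * B1))ᵀ * (-(D * B1))) ≤ Lam * s := by
    rw [Matrix.transpose_neg, Matrix.neg_mul, Matrix.mul_neg, neg_neg, hs]
    exact frob_mul_right D hB1t hB1sq (fun ξ => (hA1.2 ξ).2)
  have hM3 : Matrix.trace ((D * Q * B1)ᵀ * (D * Q * B1)) ≤ Lam * s := by
    have h := frob_mul_right (D * Q) hB1t hB1sq (fun ξ => (hA1.2 ξ).2)
    have h2 : Matrix.trace ((D * Q)ᵀ * (D * Q)) = s := by
      calc Matrix.trace ((D * Q)ᵀ * (D * Q)) = Matrix.trace ((D * Q) * (D * Q)ᵀ) :=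
            Matrix.trace_mul_comm _ _
        _ = Matrix.trace (D * (Q * Qᵀ) * Dᵀ) := by
            rw [Matrix.transpose_mul, Matrix.mul_assoc D Q (Qᵀ * Dᵀ),
              ← Matrix.mul_assoc Q Qᵀ Dᵀ, ← Matrix.mul_assoc]
        _ = Matrix.trace (D * Dᵀ) := by rw [hQQt, mul_one]
        _ = s := by rw [Matrix.trace_mul_comm, hs]
    rw [h2] at h
    exact h
  -- the main negative term
  have hmain : (2*c) * (α - 1) ≤ -(4 * (1 - α) * lam) := by
    have h41 : (2:ℝ) * c * (α - 1) = (4 * (α - 1)) / t := by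
      rw [hc]; ring
    rw [h41, div_le_iff₀ ht0]
    nlinarith [mul_nonneg (by linarith : (0:ℝ) ≤ 1 - α) (by linarith : (0:ℝ) ≤ 1 - lam * t)]
  -- first part
  have key : Matrix.trace (Jmat n α * (A1 + A2 - (2:ℝ) • (B2 * Q * B1)))
      ≤ 4 * (S * d - (1 - α) * lam) := by
    have e1' := hSd _ hM1
    have e2' := hSd _ hM2
    have e3' := hSd _ hM3
    rw [htr, hJE]
    linarith
  refine ⟨⟨Q, hQorth, key⟩, fun hsm => ⟨Q, hQorth, ?_⟩⟩
  -- second part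
  have hSpos : 0 < S := by
    rw [hS]
    refine Real.sqrt_pos.2 (mul_pos ?_ hLam0)
    exact_mod_cast hn0
  have h1 : S * d ≤ (1 - α) * lam / 2 := by
    calc S * d ≤ S * ((1 - α) * lam / (2 * S)) :=
          mul_le_mul_of_nonneg_left hsm hSpos.le
      _ = (1 - α) * lam / 2 := by field_simp
  calc Matrix.trace (Jmat n α * (A1 + A2 - (2:ℝ) • (B2 * Q * B1)))
      ≤ 4 * (S * d - (1 - α) * lam) := key
    _ ≤ -(2 * (1 - α) * lam) := by linarith

end
end

section
/- Let δ ≥ 1, α ∈ (0,1), and let A be the 2×2 matrix with rows (δ+1, δ−1) and (δ−1, δ+1). Then the principal square root of A is A^{1/2} = (1/√2)·[[√δ+1, √δ−1],[√δ−1, √δ+1]], and trace{ A^{1/2} J_α A^{1/2} (I − J₀) } = −(1−α)(√δ+1)² + (√δ−1)². In particular, trace{ A^{1/2} J_α A^{1/2} (I − J₀) } < 0 if and only if α < 1 − ((√δ−1)/(√δ+1))², equivalently if and only if δ < ((1+√(1−α))/(1−√(1−α)))². -/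
open MeasureTheory Matrix

noncomputable section

lemma sqrt_key (δ : ℝ) (hδ : 1 ≤ δ) :
    msqrt !![δ + 1, δ - 1; δ - 1, δ + 1] =
      (Real.sqrt 2)⁻¹ •
        !![Real.sqrt δ + 1, Real.sqrt δ - 1; Real.sqrt δ - 1, Real.sqrt δ + 1] := by
  have hs : Real.sqrt δ * Real.sqrt δ = δ := Real.mul_self_sqrt (by linarith)
  have h2 : Real.sqrt 2 * Real.sqrt 2 = 2 := Real.mul_self_sqrt (by norm_num)
  have hs1 : 1 ≤ Real.sqrt δ := by
    rw [show (1:ℝ) = Real.sqrt 1 by simp]; exact Real.sqrt_le_sqrt hδ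
  set B := (Real.sqrt 2)⁻¹ •
        !![Real.sqrt δ + 1, Real.sqrt δ - 1; Real.sqrt δ - 1, Real.sqrt δ + 1] with hB
  have h2pos : (0:ℝ) < Real.sqrt 2 := by positivity
  have hBpsd : B.PosSemidef := by
    refine Matrix.posSemidef_iff_dotProduct_mulVec.2 ⟨?_, ?_⟩
    · ext i j; fin_cases i <;> fin_cases j <;> simp [hB, Matrix.IsHermitian]
    · intro x
      have : (star x ⬝ᵥ B.mulVec x) = (Real.sqrt 2)⁻¹ *
          ((Real.sqrt δ + 1) * (x 0 * x 0 + x 1 * x 1) + (Real.sqrt δ - 1) * (2 * x 0 * x 1)) := by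
        simp [hB, dotProduct, Matrix.mulVec, Fin.sum_univ_two]
        ring
      rw [this]
      have := sq_nonneg (x 0 + x 1)
      have := sq_nonneg (x 0 - x 1)
      have h1 : (0:ℝ) ≤ (Real.sqrt δ + 1) * (x 0 * x 0 + x 1 * x 1) + (Real.sqrt δ - 1) * (2 * x 0 * x 1) := by
        nlinarith
      positivity
  have hsq : B ^ 2 = !![δ + 1, δ - 1; δ - 1, δ + 1] := by
    rw [pow_two]
    ext i j
    fin_cases i <;> fin_cases j <;>
      simp [hB, Matrix.mul_apply, Fin.sum_univ_two] <;>
      field_simp <;> nlinarith [hs, h2]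
  have hApsd : (!![δ + 1, δ - 1; δ - 1, δ + 1] : Matrix (Fin 2) (Fin 2) ℝ).PosSemidef := by
    rw [← hsq]; exact hBpsd.pow 2
  rw [msqrt, dif_pos hApsd]
  open scoped MatrixOrder in
  have key : CFC.sqrt (!![δ + 1, δ - 1; δ - 1, δ + 1] : Matrix (Fin 2) (Fin 2) ℝ) = B :=
    CFC.sqrt_unique (by rw [← pow_two]; exact hsq) hBpsd.nonneg
  open scoped MatrixOrder in
  rw [CFC.sqrt_eq_cfc, cfc_nnreal_eq_real _ _, hApsd.1.cfc_eq] at key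
  rw [← key]
  simp only [IsHermitian.cfc, Unitary.conjStarAlgAut_apply]
  congr 3
  funext x
  simp only [Function.comp_apply, Real.coe_sqrt, Real.coe_toNNReal',
    max_eq_left (hApsd.eigenvalues_nonneg x)]
  rfl

lemma trace_key (δ α : ℝ) :
    Matrix.trace (((Real.sqrt 2)⁻¹ •
        !![Real.sqrt δ + 1, Real.sqrt δ - 1; Real.sqrt δ - 1, Real.sqrt δ + 1]) * Jmat 2 α *
        ((Real.sqrt 2)⁻¹ •
        !![Real.sqrt δ + 1, Real.sqrt δ - 1; Real.sqrt δ - 1, Real.sqrt δ + 1]) * (1 - J0 2)) =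
      -((1 - α) * (Real.sqrt δ + 1) ^ 2) + (Real.sqrt δ - 1) ^ 2 := by
  have h2 : Real.sqrt 2 * Real.sqrt 2 = 2 := Real.mul_self_sqrt (by norm_num)
  have h2pos : (0:ℝ) < Real.sqrt 2 := by positivity
  have hJ : Jmat 2 α = !![α - 1, 0; 0, 1] := by
    ext i j; fin_cases i <;> fin_cases j <;> simp [Jmat, Matrix.diagonal]
  have hJ0 : (1 - J0 2 : Matrix (Fin 2) (Fin 2) ℝ) = !![2, 0; 0, 0] := by
    ext i j; fin_cases i <;> fin_cases j <;>
      simp [J0, Matrix.diagonal, Matrix.one_apply] <;> norm_num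
  rw [hJ, hJ0, Matrix.smul_mul, Matrix.smul_mul, Matrix.mul_smul, Matrix.smul_mul,
    Matrix.smul_mul, smul_smul, Matrix.trace_smul, Matrix.mul_fin_two, Matrix.mul_fin_two,
    Matrix.mul_fin_two, Matrix.trace_fin_two_of]
  field_simp
  rw [Real.sq_sqrt (by norm_num : (0:ℝ) ≤ 2), smul_eq_mul]
  ring

lemma ineq_key (δ α : ℝ) (hδ : 1 ≤ δ) (hα : α ∈ Set.Ioo (0 : ℝ) 1) :
    ((-((1 - α) * (Real.sqrt δ + 1) ^ 2) + (Real.sqrt δ - 1) ^ 2 < 0 ↔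
      α < 1 - ((Real.sqrt δ - 1) / (Real.sqrt δ + 1)) ^ 2) ∧
    (-((1 - α) * (Real.sqrt δ + 1) ^ 2) + (Real.sqrt δ - 1) ^ 2 < 0 ↔
      δ < ((1 + Real.sqrt (1 - α)) / (1 - Real.sqrt (1 - α))) ^ 2)) := by
  obtain ⟨hα0, hα1⟩ := hα
  set s := Real.sqrt δ with hs
  have hs1 : 1 ≤ s := by
    rw [hs, show (1:ℝ) = Real.sqrt 1 by simp]; exact Real.sqrt_le_sqrt hδ
  have hsp : 0 < s + 1 := by linarith
  have hssq : s ^ 2 = δ := Real.sq_sqrt (by linarith)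
  set t := Real.sqrt (1 - α) with ht
  have ht2 : t ^ 2 = 1 - α := Real.sq_sqrt (by linarith)
  have ht0 : 0 < t := Real.sqrt_pos.2 (by linarith)
  have ht1 : t < 1 := by nlinarith
  constructor
  · rw [div_pow, lt_sub_comm, div_lt_iff₀ (by positivity)]
    constructor <;> intro h <;> nlinarith
  · have key : (-((1 - α) * (s + 1) ^ 2) + (s - 1) ^ 2 < 0) ↔ s - 1 < t * (s + 1) := by
      rw [← ht2]
      constructor
      · intro h
        by_contra hc
        push_neg at hc
        have := mul_le_mul hc hc (by nlinarith) (by linarith)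
        nlinarith
      · intro h
        have := mul_lt_mul'' h h (by linarith) (by nlinarith)
        nlinarith
    rw [key, div_pow, ← hssq, lt_div_iff₀ (by nlinarith)]
    constructor
    · intro h
      have h2 : s * (1 - t) < 1 + t := by nlinarith
      have := mul_lt_mul'' h2 h2 (by nlinarith) (by nlinarith)
      nlinarith
    · intro h
      by_contra hc
      push_neg at hc
      have h2 : 1 + t ≤ s * (1 - t) := by nlinarith
      have := mul_le_mul h2 h2 (by linarith) (by nlinarith)
      nlinarith

/-- the explicit 2×2 example with the mirror coupling `J₀`
(Example 6.2). -/
theorem stmt15 (δ : ℝ) (hδ : 1 ≤ δ) (α : ℝ) (hα : α ∈ Set.Ioo (0 : ℝ) 1) :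
    msqrt !![δ + 1, δ - 1; δ - 1, δ + 1] =
      (Real.sqrt 2)⁻¹ •
        !![Real.sqrt δ + 1, Real.sqrt δ - 1; Real.sqrt δ - 1, Real.sqrt δ + 1] ∧
    Matrix.trace (msqrt !![δ + 1, δ - 1; δ - 1, δ + 1] * Jmat 2 α *
        msqrt !![δ + 1, δ - 1; δ - 1, δ + 1] * (1 - J0 2)) =
      -((1 - α) * (Real.sqrt δ + 1) ^ 2) + (Real.sqrt δ - 1) ^ 2 ∧
    (Matrix.trace (msqrt !![δ + 1, δ - 1; δ - 1, δ + 1] * Jmat 2 α *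
        msqrt !![δ + 1, δ - 1; δ - 1, δ + 1] * (1 - J0 2)) < 0 ↔
      α < 1 - ((Real.sqrt δ - 1) / (Real.sqrt δ + 1)) ^ 2) ∧
    (Matrix.trace (msqrt !![δ + 1, δ - 1; δ - 1, δ + 1] * Jmat 2 α *
        msqrt !![δ + 1, δ - 1; δ - 1, δ + 1] * (1 - J0 2)) < 0 ↔
      δ < ((1 + Real.sqrt (1 - α)) / (1 - Real.sqrt (1 - α))) ^ 2) := by
  have h1 := sqrt_key δ hδ
  have h2 := trace_key δ α
  have h3 := ineq_key δ α hδ hα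
  rw [h1]
  exact ⟨rfl, h2, h2 ▸ h3.1, h2 ▸ h3.2⟩

end
end

section
/- Let δ ≥ 1, α ∈ (0,1), and let A be the 2×2 matrix with rows (δ+1, δ−1) and (δ−1, δ+1). Then min_{Q ∈ O(2)} trace{ A^{1/2} J_α A^{1/2} (I − Q) } = α(δ+1) − √( α²(δ+1)² + 16(1−α)δ ), and this quantity is strictly negative for every δ ≥ 1 and α ∈ (0,1). -/
open MeasureTheory Matrix

noncomputable section

lemma psd_aux (a b : ℝ) (h1 : 0 ≤ a + b) (h2 : 0 ≤ a - b) : (!![a, b; b, a]).PosSemidef := by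
  rw [Matrix.posSemidef_iff_dotProduct_mulVec]
  constructor
  · ext i j
    fin_cases i <;> fin_cases j <;> simp [Matrix.conjTranspose, Matrix.vecHead, Matrix.vecTail]
  · intro x
    simp [dotProduct, Matrix.mulVec, Fin.sum_univ_two]
    nlinarith [sq_nonneg (x 0 + x 1), sq_nonneg (x 0 - x 1)]

lemma sqS (s c δ : ℝ) (hc0 : c ≠ 0) (hs : s^2 = δ) (hc : c^2 = 2) :
    !![(s+1)/c, (s-1)/c; (s-1)/c, (s+1)/c] ^ 2 = !![δ+1, δ-1; δ-1, δ+1] := by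
  rw [pow_two, Matrix.mul_fin_two]
  ext i j
  fin_cases i <;> fin_cases j <;> simp <;> field_simp <;> nlinarith [hs, hc]

lemma Mcomp (s c δ α : ℝ) (hc0 : c ≠ 0) (hs : s^2 = δ) (hc : c^2 = 2) :
    !![(s+1)/c, (s-1)/c; (s-1)/c, (s+1)/c] * !![α-1, 0; 0, 1] *
      !![(s+1)/c, (s-1)/c; (s-1)/c, (s+1)/c] =
    !![((α-1)*(s+1)^2 + (s-1)^2)/2, α*(δ-1)/2;
       α*(δ-1)/2, ((α-1)*(s-1)^2 + (s+1)^2)/2] := by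
  rw [Matrix.mul_fin_two, Matrix.mul_fin_two]
  ext i j
  fin_cases i <;> fin_cases j <;> simp <;> field_simp
  · linear_combination (-((α-1)*(s+1)^2+(s-1)^2))*hc
  · linear_combination (2*α)*hs + (α*(1-δ))*hc
  · linear_combination (2*α)*hs + (α*(1-δ))*hc
  · linear_combination (-((α-1)*(s-1)^2+(s+1)^2))*hc

lemma trace_comp (m11 m12 m22 : ℝ) (Q : Matrix (Fin 2) (Fin 2) ℝ) :
    Matrix.trace (!![m11, m12; m12, m22] * (1 - Q)) =
      m11 + m22 - (m11 * Q 0 0 + m12 * Q 1 0 + m12 * Q 0 1 + m22 * Q 1 1) := by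
  simp [Matrix.trace_fin_two, Matrix.mul_apply, Fin.sum_univ_two, Matrix.sub_apply,
    Matrix.one_apply, Matrix.vecMul, dotProduct]
  ring

lemma orth_wit (d e r : ℝ) (hr : r ≠ 0) (hD : d^2 + e^2 = r^2) :
    !![d/r, e/r; e/r, -(d/r)] * !![d/r, e/r; e/r, -(d/r)]ᵀ = 1 ∧
    !![d/r, e/r; e/r, -(d/r)]ᵀ * !![d/r, e/r; e/r, -(d/r)] = 1 := by
  constructor <;>
  · ext i j
    fin_cases i <;> fin_cases j <;>
      simp [Matrix.mul_apply, Fin.sum_univ_two, Matrix.transpose_apply, Matrix.one_apply,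
        Matrix.vecHead, Matrix.vecTail] <;>
      field_simp <;>
      first
        | linear_combination hD
        | linear_combination -hD
        | ring

lemma trace_wit (m11 m12 m22 r : ℝ) (hr : r ≠ 0)
    (hD : (m11-m22)^2 + (2*m12)^2 = r^2) :
    Matrix.trace (!![m11, m12; m12, m22] *
      (1 - !![(m11-m22)/r, 2*m12/r; 2*m12/r, -((m11-m22)/r)])) = m11 + m22 - r := by
  rw [trace_comp]
  have key : (m11*((m11-m22)/r) + m12*(2*m12/r) + m12*(2*m12/r) + m22*(-((m11-m22)/r))) = r := by
    field_simp
    linear_combination hD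
  have e00 : !![(m11-m22)/r, 2*m12/r; 2*m12/r, -((m11-m22)/r)] 0 0 = (m11-m22)/r := rfl
  have e01 : !![(m11-m22)/r, 2*m12/r; 2*m12/r, -((m11-m22)/r)] 0 1 = 2*m12/r := rfl
  have e10 : !![(m11-m22)/r, 2*m12/r; 2*m12/r, -((m11-m22)/r)] 1 0 = 2*m12/r := rfl
  have e11 : !![(m11-m22)/r, 2*m12/r; 2*m12/r, -((m11-m22)/r)] 1 1 = -((m11-m22)/r) := rfl
  rw [e00, e01, e10, e11]
  linarith [key]

lemma cs_bound (m11 m12 m22 r a b g k : ℝ)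
    (c1 : a*a + b*b = 1) (c3 : a*g + b*k = 0)
    (c4 : a*a + g*g = 1) (c5 : a*b + g*k = 0) (c6 : b*b + k*k = 1)
    (hD : (m11-m22)^2 + (2*m12)^2 = r^2)
    (htr2 : (m11+m22)^2 ≤ r^2) (hr0 : 0 < r) :
    m11*a + m12*g + m12*b + m22*k ≤ r := by
  have hAH : (a-k)*(a+k) = 0 := by linear_combination c1 - c6
  have hUP : (a+k)*(b+g) = 0 := by linear_combination c3 + c5
  have key : (m11*a + m12*g + m12*b + m22*k)^2 ≤ r^2 := by
    rcases mul_eq_zero.mp hUP with hu | hp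
    · have hk : k = -a := by linarith
      subst hk
      have h1a : (b+g)^2 ≤ 4 - 4*(a*a) := by nlinarith [sq_nonneg (b-g), c1, c4]
      have h2a : 0 ≤ ((m11-m22)^2 + (2*m12)^2) * (4 - 4*(a*a) - (b+g)^2) :=
        mul_nonneg (by positivity) (by linarith)
      nlinarith [sq_nonneg ((m11-m22)*(b+g) - 4*m12*a), h2a, hD]
    · have hb : b = -g := by linarith
      subst hb
      have ha2 : 0 ≤ 1 - a*a := by nlinarith [c4, sq_nonneg g]
      rcases mul_eq_zero.mp hAH with hv | hu
      · have hk : k = a := by linarith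
        subst hk
        nlinarith [mul_nonneg (sq_nonneg (m11+m22)) ha2, htr2]
      · have hk : k = -a := by linarith
        subst hk
        nlinarith [mul_nonneg (sq_nonneg (m11-m22)) ha2, hD, sq_nonneg (2*m12)]
  nlinarith [key, hr0]

/-- the optimal coupling for the explicit 2×2 example
(Example 6.2, optimal coupling part). -/
theorem stmt16 (δ : ℝ) (hδ : 1 ≤ δ) (α : ℝ) (hα : α ∈ Set.Ioo (0 : ℝ) 1) :
    IsLeast {t : ℝ | ∃ Q, IsOrthMat Q ∧
        t = Matrix.trace (msqrt !![δ + 1, δ - 1; δ - 1, δ + 1] * Jmat 2 α *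
              msqrt !![δ + 1, δ - 1; δ - 1, δ + 1] * (1 - Q))}
      (α * (δ + 1) - Real.sqrt (α ^ 2 * (δ + 1) ^ 2 + 16 * (1 - α) * δ)) ∧
    α * (δ + 1) - Real.sqrt (α ^ 2 * (δ + 1) ^ 2 + 16 * (1 - α) * δ) < 0 := by
  obtain ⟨hα0, hα1⟩ := hα
  have hδ0 : (0:ℝ) ≤ δ := by linarith
  have hs : (Real.sqrt δ)^2 = δ := Real.sq_sqrt hδ0
  have hc : (Real.sqrt 2)^2 = 2 := Real.sq_sqrt (by norm_num)
  set s := Real.sqrt δ with hs_def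
  set c := Real.sqrt 2 with hc_def
  have hs1 : 1 ≤ s := by
    rw [show (1:ℝ) = Real.sqrt 1 by simp, hs_def]; exact Real.sqrt_le_sqrt hδ
  have hc0 : 0 < c := Real.sqrt_pos.mpr (by norm_num)
  have hApsd : (!![δ+1, δ-1; δ-1, δ+1]).PosSemidef := psd_aux _ _ (by linarith) (by linarith)
  have hSpsd : (!![(s+1)/c, (s-1)/c; (s-1)/c, (s+1)/c]).PosSemidef := by
    refine psd_aux _ _ ?_ ?_
    · rw [← add_div]; exact div_nonneg (by linarith) hc0.le
    · rw [← sub_div]; exact div_nonneg (by linarith) hc0.le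
  have hmsqrt : msqrt !![δ+1, δ-1; δ-1, δ+1] = !![(s+1)/c, (s-1)/c; (s-1)/c, (s+1)/c] := by
    open scoped MatrixOrder in
    have h1 : msqrt !![δ+1, δ-1; δ-1, δ+1] = CFC.sqrt !![δ+1, δ-1; δ-1, δ+1] := by
      rw [CFC.sqrt_eq_real_sqrt _ (Matrix.nonneg_iff_posSemidef.mpr hApsd), cfcₙ_eq_cfc, hApsd.1.cfc_eq]
      simp only [msqrt, dif_pos hApsd, IsHermitian.cfc, Unitary.conjStarAlgAut_apply]
      rfl
    open scoped MatrixOrder in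
    rw [h1]
    open scoped MatrixOrder in
    exact CFC.sqrt_unique (by rw [← sq]; exact sqS s c δ hc0.ne' hs hc)
      (Matrix.nonneg_iff_posSemidef.mpr hSpsd)
  have hJ : Jmat 2 α = !![α-1, 0; 0, 1] := by
    ext i j; fin_cases i <;> fin_cases j <;> simp [Jmat, Matrix.diagonal]
  have hM0 : msqrt !![δ+1, δ-1; δ-1, δ+1] * Jmat 2 α * msqrt !![δ+1, δ-1; δ-1, δ+1]
      = !![((α-1)*(s+1)^2 + (s-1)^2)/2, α*(δ-1)/2;
           α*(δ-1)/2, ((α-1)*(s-1)^2 + (s+1)^2)/2] := by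
    rw [hmsqrt, hJ]; exact Mcomp s c δ α hc0.ne' hs hc
  obtain ⟨m11, hm11⟩ : ∃ x : ℝ, ((α-1)*(s+1)^2 + (s-1)^2)/2 = x := ⟨_, rfl⟩
  obtain ⟨m12, hm12⟩ : ∃ x : ℝ, α*(δ-1)/2 = x := ⟨_, rfl⟩
  obtain ⟨m22, hm22⟩ : ∃ x : ℝ, ((α-1)*(s-1)^2 + (s+1)^2)/2 = x := ⟨_, rfl⟩
  rw [hm11, hm12, hm22] at hM0
  have hrarg : 0 < α^2*(δ+1)^2 + 16*(1-α)*δ := by nlinarith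
  have hr2 : (Real.sqrt (α^2*(δ+1)^2 + 16*(1-α)*δ))^2 = α^2*(δ+1)^2 + 16*(1-α)*δ :=
    Real.sq_sqrt hrarg.le
  set r := Real.sqrt (α^2*(δ+1)^2 + 16*(1-α)*δ) with hr_def
  have hr0 : 0 < r := Real.sqrt_pos.mpr hrarg
  have htr : m11 + m22 = α*(δ+1) := by
    rw [← hm11, ← hm22]; linear_combination α*hs
  have hD : (m11-m22)^2 + (2*m12)^2 = r^2 := by
    rw [← hm11, ← hm22, ← hm12, hr2]; linear_combination (4*(α-2)^2)*hs
  have htr2 : (m11+m22)^2 ≤ r^2 := by rw [htr, hr2]; nlinarith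
  obtain ⟨ho1, ho2⟩ := orth_wit (m11-m22) (2*m12) r hr0.ne' hD
  refine ⟨⟨⟨!![(m11-m22)/r, 2*m12/r; 2*m12/r, -((m11-m22)/r)], ⟨ho1, ho2⟩, ?_⟩, ?_⟩, ?_⟩
  · rw [hM0, trace_wit m11 m12 m22 r hr0.ne' hD, htr]
  · rintro t ⟨Q, ⟨h1, h2⟩, rfl⟩
    rw [hM0, trace_comp]
    have c1 : Q 0 0 * Q 0 0 + Q 0 1 * Q 0 1 = 1 := by
      have := congr_fun (congr_fun h1 0) 0
      simpa [Matrix.mul_apply, Fin.sum_univ_two, Matrix.transpose_apply, Matrix.one_apply]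
        using this
    have c3 : Q 0 0 * Q 1 0 + Q 0 1 * Q 1 1 = 0 := by
      have := congr_fun (congr_fun h1 0) 1
      simpa [Matrix.mul_apply, Fin.sum_univ_two, Matrix.transpose_apply, Matrix.one_apply]
        using this
    have c4 : Q 0 0 * Q 0 0 + Q 1 0 * Q 1 0 = 1 := by
      have := congr_fun (congr_fun h2 0) 0
      simpa [Matrix.mul_apply, Fin.sum_univ_two, Matrix.transpose_apply, Matrix.one_apply]
        using this
    have c5 : Q 0 0 * Q 0 1 + Q 1 0 * Q 1 1 = 0 := by
      have := congr_fun (congr_fun h2 0) 1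
      simpa [Matrix.mul_apply, Fin.sum_univ_two, Matrix.transpose_apply, Matrix.one_apply]
        using this
    have c6 : Q 0 1 * Q 0 1 + Q 1 1 * Q 1 1 = 1 := by
      have := congr_fun (congr_fun h2 1) 1
      simpa [Matrix.mul_apply, Fin.sum_univ_two, Matrix.transpose_apply, Matrix.one_apply]
        using this
    have hT := cs_bound m11 m12 m22 r (Q 0 0) (Q 0 1) (Q 1 0) (Q 1 1) c1 c3 c4 c5 c6 hD htr2 hr0
    linarith [htr, hT]
  · have hy : 0 < 16*(1-α)*δ := by nlinarith
    by_contra hcon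
    push_neg at hcon
    have h1 : r * r ≤ (α*(δ+1)) * (α*(δ+1)) :=
      mul_self_le_mul_self hr0.le (by linarith)
    nlinarith [hr2, hy, h1]


end
end

section
/- In ℝ³, let E₁ = diag(1,100,1)·𝔹 and E₂ = diag(1,1,100)·𝔹 be the images of the open unit ball under the indicated diagonal linear maps (two congruent ellipsoids of equal volume with largest axes along e₂ and e₃ respectively). Then for every measurable measure-preserving map φ : E₁ → E₂ (pushforward under φ of Lebesgue measure restricted to E₁ equals Lebesgue measure restricted to E₂), one has ⨍_{E₁} |P₁(φ(y) − y)|² dy ≤ 4 and ⨍_{E₁} |(I − P₁)(φ(y) − y)|² dy ≥ 8; in particular ⨍_{E₁} |P₁(φ(y) − y)|² dy < ⨍_{E₁} |(I − P₁)(φ(y) − y)|² dy. -/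
open MeasureTheory Matrix

noncomputable section

/-- The ellipsoid `diag(1,100,1)·𝔹` in `ℝ³`. -/
def ellipsoid3E1 : Set (EucSp 3) :=
  {y | (y 0) ^ 2 + (y 1 / 100) ^ 2 + (y 2) ^ 2 < 1}

/-- The ellipsoid `diag(1,1,100)·𝔹` in `ℝ³`. -/
def ellipsoid3E2 : Set (EucSp 3) :=
  {y | (y 0) ^ 2 + (y 1) ^ 2 + (y 2 / 100) ^ 2 < 1}


/-- An open box in `EucSp 3`. -/
def ebox3 (a b : Fin 3 → ℝ) : Set (EucSp 3) :=
  {x | ∀ i, x i ∈ Set.Ioo (a i) (b i)}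

lemma ebox3_eq_preimage (a b : Fin 3 → ℝ) :
    ebox3 a b = (MeasurableEquiv.toLp 2 (Fin 3 → ℝ)).symm ⁻¹'
      (Set.univ.pi fun i => Set.Ioo (a i) (b i)) := by
  ext x
  simp [ebox3, MeasurableEquiv.coe_toLp_symm, Set.mem_pi]

lemma ebox3_volume (a b : Fin 3 → ℝ) :
    volume (ebox3 a b) = ∏ i, ENNReal.ofReal (b i - a i) := by
  rw [ebox3_eq_preimage]
  rw [(EuclideanSpace.volume_preserving_symm_measurableEquiv_toLp (Fin 3)).measure_preimage
    ((MeasurableSet.univ_pi fun i => measurableSet_Ioo).nullMeasurableSet)]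
  rw [volume_pi_pi]
  simp [Real.volume_Ioo]

lemma ebox3_measurable (a b : Fin 3 → ℝ) : MeasurableSet (ebox3 a b) := by
  rw [ebox3_eq_preimage]
  exact (MeasurableEquiv.toLp 2 (Fin 3 → ℝ)).symm.measurable
    (MeasurableSet.univ_pi fun i => measurableSet_Ioo)

lemma e1meas : MeasurableSet ellipsoid3E1 := by
  have : Continuous fun y : EucSp 3 => (y 0) ^ 2 + (y 1 / 100) ^ 2 + (y 2) ^ 2 := by
    fun_prop
  exact (isOpen_lt this continuous_const).measurableSet

lemma e2meas : MeasurableSet ellipsoid3E2 := by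
  have : Continuous fun y : EucSp 3 => (y 0) ^ 2 + (y 1) ^ 2 + (y 2 / 100) ^ 2 := by
    fun_prop
  exact (isOpen_lt this continuous_const).measurableSet

lemma e1_bounds {y : EucSp 3} (hy : y ∈ ellipsoid3E1) :
    (y 0) ^ 2 < 1 ∧ (y 1) ^ 2 < 10000 ∧ (y 2) ^ 2 < 1 := by
  have h : (y 0) ^ 2 + (y 1 / 100) ^ 2 + (y 2) ^ 2 < 1 := hy
  refine ⟨by nlinarith [sq_nonneg (y 1 / 100), sq_nonneg (y 2)], ?_,
    by nlinarith [sq_nonneg (y 0), sq_nonneg (y 1 / 100)]⟩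
  nlinarith [sq_nonneg (y 0), sq_nonneg (y 2)]

lemma e2_bounds {y : EucSp 3} (hy : y ∈ ellipsoid3E2) :
    (y 0) ^ 2 < 1 ∧ (y 1) ^ 2 < 1 ∧ (y 2) ^ 2 < 10000 := by
  have h : (y 0) ^ 2 + (y 1) ^ 2 + (y 2 / 100) ^ 2 < 1 := hy
  refine ⟨by nlinarith [sq_nonneg (y 1), sq_nonneg (y 2 / 100)],
    by nlinarith [sq_nonneg (y 0), sq_nonneg (y 2 / 100)], ?_⟩
  nlinarith [sq_nonneg (y 0), sq_nonneg (y 1)]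

lemma e1_subset_box : ellipsoid3E1 ⊆ ebox3 ![-1, -100, -1] ![1, 100, 1] := by
  intro y hy
  obtain ⟨h0, h1, h2⟩ := e1_bounds hy
  intro i
  fin_cases i
  · show y 0 ∈ Set.Ioo (-1 : ℝ) 1
    constructor <;> nlinarith
  · show y 1 ∈ Set.Ioo (-100 : ℝ) 100
    constructor <;> nlinarith
  · show y 2 ∈ Set.Ioo (-1 : ℝ) 1
    constructor <;> nlinarith

lemma box_subset_e1 : ebox3 ![-2⁻¹, -2⁻¹, -2⁻¹] ![2⁻¹, 2⁻¹, 2⁻¹] ⊆ ellipsoid3E1 := by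
  intro y hy
  have h0 := hy 0
  have h1 := hy 1
  have h2 := hy 2
  rw [show ((0:Fin 3)) = 0 from rfl] at h0
  simp only [Set.mem_Ioo, Matrix.cons_val_zero, Matrix.cons_val_one, Matrix.cons_val_two,
    Matrix.head_cons, Matrix.tail_cons] at h0 h1 h2
  show (y 0) ^ 2 + (y 1 / 100) ^ 2 + (y 2) ^ 2 < 1
  nlinarith [h0.1, h0.2, h1.1, h1.2, h2.1, h2.2]

lemma box_subset_e2 : ebox3 ![-2⁻¹, -2⁻¹, 50] ![2⁻¹, 2⁻¹, 70] ⊆ ellipsoid3E2 := by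
  intro y hy
  have h0 := hy 0
  have h1 := hy 1
  have h2 := hy 2
  rw [show ((0:Fin 3)) = 0 from rfl] at h0
  simp only [Set.mem_Ioo, Matrix.cons_val_zero, Matrix.cons_val_one, Matrix.cons_val_two,
    Matrix.head_cons, Matrix.tail_cons] at h0 h1 h2
  show (y 0) ^ 2 + (y 1) ^ 2 + (y 2 / 100) ^ 2 < 1
  nlinarith [h0.1, h0.2, h1.1, h1.2, h2.1, h2.2]

lemma vol_e1_le : volume ellipsoid3E1 ≤ ENNReal.ofReal 800 := by
  calc volume ellipsoid3E1 ≤ volume (ebox3 ![-1, -100, -1] ![1, 100, 1]) :=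
        measure_mono e1_subset_box
    _ = ENNReal.ofReal 800 := by
        rw [ebox3_volume, Fin.prod_univ_three]
        simp only [Matrix.cons_val_zero, Matrix.cons_val_one, Matrix.head_cons,
          Matrix.cons_val_two, Matrix.tail_cons]
        rw [← ENNReal.ofReal_mul (by norm_num), ← ENNReal.ofReal_mul (by norm_num)]
        norm_num

lemma vol_e1_ge : ENNReal.ofReal 1 ≤ volume ellipsoid3E1 := by
  calc ENNReal.ofReal 1 = volume (ebox3 ![-2⁻¹, -2⁻¹, -2⁻¹] ![2⁻¹, 2⁻¹, 2⁻¹]) := by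
        rw [ebox3_volume, Fin.prod_univ_three]
        simp only [Matrix.cons_val_zero, Matrix.cons_val_one, Matrix.head_cons,
          Matrix.cons_val_two, Matrix.tail_cons]
        rw [← ENNReal.ofReal_mul (by norm_num), ← ENNReal.ofReal_mul (by norm_num)]
        norm_num
    _ ≤ volume ellipsoid3E1 := measure_mono box_subset_e1

lemma vol_e1_ne_top : volume ellipsoid3E1 ≠ ⊤ :=
  ne_top_of_le_ne_top (by simp) vol_e1_le

/-- the three-dimensional counterexample for large distortion
(Section 6.3.2): no measure-preserving coupling works. -/
theorem stmt19 (φ : EucSp 3 → EucSp 3) (hφmeas : Measurable φ)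
    (hφmaps : ∀ y ∈ ellipsoid3E1, φ y ∈ ellipsoid3E2)
    (hφpush : Measure.map φ (volume.restrict ellipsoid3E1) =
      volume.restrict ellipsoid3E2) :
    (⨍ y in ellipsoid3E1, ((φ y - y) 0) ^ 2) ≤ 4 ∧
    (⨍ y in ellipsoid3E1, (((φ y - y) 1) ^ 2 + ((φ y - y) 2) ^ 2)) ≥ 8 ∧
    (⨍ y in ellipsoid3E1, ((φ y - y) 0) ^ 2) <
      (⨍ y in ellipsoid3E1, (((φ y - y) 1) ^ 2 + ((φ y - y) 2) ^ 2)) := by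
  classical
  haveI hfin1 : IsFiniteMeasure (volume.restrict ellipsoid3E1) :=
    ⟨by rw [Measure.restrict_apply_univ]
        exact lt_of_le_of_lt vol_e1_le (by simp)⟩
  have hveq : volume ellipsoid3E1 = volume ellipsoid3E2 := by
    have h := congrArg (fun μ : Measure (EucSp 3) => μ Set.univ) hφpush
    simpa [Measure.map_apply hφmeas MeasurableSet.univ, Measure.restrict_apply_univ] using h
  haveI hfin2 : IsFiniteMeasure (volume.restrict ellipsoid3E2) :=
    ⟨by rw [Measure.restrict_apply_univ, ← hveq]
        exact lt_of_le_of_lt vol_e1_le (by simp)⟩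
  set V : ℝ := (volume ellipsoid3E1).toReal with hVdef
  have hV1 : (1:ℝ) ≤ V := by
    have := ENNReal.toReal_mono vol_e1_ne_top vol_e1_ge
    simpa using this
  have hV800 : V ≤ 800 := by
    have := ENNReal.toReal_mono (by simp) vol_e1_le
    simpa using this
  have hVpos : (0:ℝ) < V := lt_of_lt_of_le one_pos hV1
  have key : ∀ (f : EucSp 3 → ℝ), Measurable f → ∀ C : ℝ,
      (∀ y ∈ ellipsoid3E1, |f y| ≤ C) → IntegrableOn f ellipsoid3E1 := by
    intro f hf C hC
    exact ⟨hf.aestronglyMeasurable, HasFiniteIntegral.of_bounded (C := C)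
      (ae_restrict_of_forall_mem e1meas fun y hy => by
        simpa [Real.norm_eq_abs] using hC y hy)⟩
  -- measurability
  have hm0 : Measurable fun y : EucSp 3 => ((φ y - y) 0) ^ 2 :=
    ((measurable_pi_apply 0).comp ((WithLp.measurable_ofLp 2 _).comp (hφmeas.sub measurable_id))).pow_const 2
  have hm12 : Measurable fun y : EucSp 3 => ((φ y - y) 1) ^ 2 + ((φ y - y) 2) ^ 2 :=
    (((measurable_pi_apply 1).comp ((WithLp.measurable_ofLp 2 _).comp (hφmeas.sub measurable_id))).pow_const 2).add
      (((measurable_pi_apply 2).comp ((WithLp.measurable_ofLp 2 _).comp (hφmeas.sub measurable_id))).pow_const 2)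
  have hmφ2 : Measurable fun y : EucSp 3 => (φ y 2) ^ 2 :=
    ((measurable_pi_apply 2).comp ((WithLp.measurable_ofLp 2 _).comp hφmeas)).pow_const 2
  -- Claim 1
  have hb0 : ∀ y ∈ ellipsoid3E1, ((φ y - y) 0) ^ 2 ≤ 4 := by
    intro y hy
    have h1 := (e1_bounds hy).1
    have h2 := (e2_bounds (hφmaps y hy)).1
    have he : (φ y - y) 0 = φ y 0 - y 0 := rfl
    rw [he]; nlinarith [sq_nonneg (φ y 0 + y 0)]
  have hint0 : IntegrableOn (fun y => ((φ y - y) 0) ^ 2) ellipsoid3E1 :=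
    key _ hm0 4 fun y hy => by rw [abs_of_nonneg (sq_nonneg _)]; exact hb0 y hy
  have hI0 : ∫ y in ellipsoid3E1, ((φ y - y) 0) ^ 2 ≤ 4 * V := by
    calc ∫ y in ellipsoid3E1, ((φ y - y) 0) ^ 2 ≤ ∫ _y in ellipsoid3E1, (4:ℝ) :=
          setIntegral_mono_on hint0 (integrable_const 4) e1meas hb0
      _ = 4 * V := by rw [setIntegral_const, measureReal_def, smul_eq_mul, mul_comm]
  have claim1 : (⨍ y in ellipsoid3E1, ((φ y - y) 0) ^ 2) ≤ 4 := by
    rw [setAverage_eq, smul_eq_mul]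
    calc V⁻¹ * ∫ y in ellipsoid3E1, ((φ y - y) 0) ^ 2 ≤ V⁻¹ * (4 * V) :=
          mul_le_mul_of_nonneg_left hI0 (inv_nonneg.2 hVpos.le)
      _ = 4 := by field_simp
  -- Claim 2
  have hbg : ∀ y ∈ ellipsoid3E1,
      |((φ y - y) 1) ^ 2 + ((φ y - y) 2) ^ 2| ≤ 50000 := by
    intro y hy
    obtain ⟨_, hy1, hy2⟩ := e1_bounds hy
    obtain ⟨_, hx1, hx2⟩ := e2_bounds (hφmaps y hy)
    have he1 : (φ y - y) 1 = φ y 1 - y 1 := rfl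
    have he2 : (φ y - y) 2 = φ y 2 - y 2 := rfl
    rw [he1, he2, abs_of_nonneg (by positivity)]
    nlinarith [sq_nonneg (φ y 1 + y 1), sq_nonneg (φ y 2 + y 2)]
  have hintg : IntegrableOn
      (fun y => ((φ y - y) 1) ^ 2 + ((φ y - y) 2) ^ 2) ellipsoid3E1 :=
    key _ hm12 50000 hbg
  have hinth : IntegrableOn (fun y => (φ y 2) ^ 2) ellipsoid3E1 :=
    key _ hmφ2 10000 fun y hy => by
      rw [abs_of_nonneg (sq_nonneg _)]
      exact (e2_bounds (hφmaps y hy)).2.2.le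
  have hpt : ∀ y ∈ ellipsoid3E1,
      (φ y 2) ^ 2 / 2 - 1 ≤ ((φ y - y) 1) ^ 2 + ((φ y - y) 2) ^ 2 := by
    intro y hy
    have hy2 := (e1_bounds hy).2.2
    have he2 : (φ y - y) 2 = φ y 2 - y 2 := rfl
    rw [he2]
    nlinarith [sq_nonneg ((φ y - y) 1), sq_nonneg (φ y 2 - 2 * y 2)]
  have hIg1 : ∫ y in ellipsoid3E1, ((φ y 2) ^ 2 / 2 - 1) ≤
      ∫ y in ellipsoid3E1, (((φ y - y) 1) ^ 2 + ((φ y - y) 2) ^ 2) :=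
    setIntegral_mono_on (by exact (hinth.div_const 2).sub (integrable_const 1))
      hintg e1meas hpt
  have hsplit : ∫ y in ellipsoid3E1, ((φ y 2) ^ 2 / 2 - 1) =
      (∫ y in ellipsoid3E1, (φ y 2) ^ 2) / 2 - V := by
    rw [integral_sub (hinth.div_const 2) (integrable_const 1), integral_div,
      setIntegral_const, measureReal_def, smul_eq_mul, mul_one]
  -- pushforward
  have hTmap : ∫ x in ellipsoid3E2, (x 2) ^ 2 = ∫ y in ellipsoid3E1, (φ y 2) ^ 2 := by
    rw [← hφpush]
    exact integral_map hφmeas.aemeasurable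
      (((measurable_pi_apply 2).comp (WithLp.measurable_ofLp 2 _)).pow_const 2).aestronglyMeasurable
  -- lower bound on second moment over E2
  have hintE2 : IntegrableOn (fun x : EucSp 3 => (x 2) ^ 2) ellipsoid3E2 :=
    ⟨(((measurable_pi_apply 2).comp (WithLp.measurable_ofLp 2 _)).pow_const 2).aestronglyMeasurable,
      HasFiniteIntegral.of_bounded (C := 10000)
        (ae_restrict_of_forall_mem e2meas fun x hx => by
          simpa [Real.norm_eq_abs, abs_of_nonneg (sq_nonneg (x 2))] using
            (e2_bounds hx).2.2.le)⟩
  have hvolB : (volume (ebox3 ![-2⁻¹, -2⁻¹, 50] ![2⁻¹, 2⁻¹, 70])).toReal = 20 := by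
    rw [ebox3_volume, Fin.prod_univ_three]
    simp only [Matrix.cons_val_zero, Matrix.cons_val_one, Matrix.cons_val_two,
      Matrix.head_cons, Matrix.tail_cons]
    rw [← ENNReal.ofReal_mul (by norm_num), ← ENNReal.ofReal_mul (by norm_num)]
    rw [ENNReal.toReal_ofReal (by norm_num)]
    norm_num
  have hstep1 : (50000:ℝ) ≤ ∫ x in ebox3 ![-2⁻¹, -2⁻¹, 50] ![2⁻¹, 2⁻¹, 70], (x 2) ^ 2 := by
    have h1 : ∫ _x in ebox3 ![-2⁻¹, -2⁻¹, 50] ![2⁻¹, 2⁻¹, 70], (2500:ℝ) ≤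
        ∫ x in ebox3 ![-2⁻¹, -2⁻¹, 50] ![2⁻¹, 2⁻¹, 70], (x 2) ^ 2 := by
      refine setIntegral_mono_on ?_ (hintE2.mono_set box_subset_e2)
        (ebox3_measurable _ _) ?_
      · haveI : IsFiniteMeasure
            (volume.restrict (ebox3 ![-2⁻¹, -2⁻¹, 50] ![2⁻¹, 2⁻¹, 70])) := by
          constructor
          rw [Measure.restrict_apply_univ, ebox3_volume]
          exact ENNReal.prod_lt_top fun i _ => ENNReal.ofReal_lt_top
        exact integrable_const 2500
      · intro x hx
        have h2 := hx 2
        simp only [Set.mem_Ioo, Matrix.cons_val_two, Matrix.tail_cons, Matrix.head_cons] at h2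
        nlinarith [h2.1, h2.2]
    rw [setIntegral_const, measureReal_def, smul_eq_mul, hvolB] at h1
    linarith
  have hstep2 : ∫ x in ebox3 ![-2⁻¹, -2⁻¹, 50] ![2⁻¹, 2⁻¹, 70], (x 2) ^ 2 ≤
      ∫ x in ellipsoid3E2, (x 2) ^ 2 :=
    setIntegral_mono_set hintE2
      (Filter.Eventually.of_forall fun x => sq_nonneg _)
      box_subset_e2.eventuallyLE
  have hT : (50000:ℝ) ≤ ∫ y in ellipsoid3E1, (φ y 2) ^ 2 := by
    rw [← hTmap]; linarith
  have hIg : 25000 - V ≤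
      ∫ y in ellipsoid3E1, (((φ y - y) 1) ^ 2 + ((φ y - y) 2) ^ 2) := by
    have := hIg1
    rw [hsplit] at this
    linarith
  have claim2 : (⨍ y in ellipsoid3E1, (((φ y - y) 1) ^ 2 + ((φ y - y) 2) ^ 2)) ≥ 8 := by
    rw [ge_iff_le, setAverage_eq, smul_eq_mul]
    calc (8:ℝ) ≤ V⁻¹ * (25000 - V) := by
          rw [inv_mul_eq_div, le_div_iff₀ hVpos]; linarith
      _ ≤ V⁻¹ * ∫ y in ellipsoid3E1, (((φ y - y) 1) ^ 2 + ((φ y - y) 2) ^ 2) :=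
          mul_le_mul_of_nonneg_left hIg (inv_nonneg.2 hVpos.le)
  exact ⟨claim1, claim2, lt_of_le_of_lt claim1 (lt_of_lt_of_le (by norm_num) claim2)⟩

end
end
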